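/- Let ψ_sc be the formal power series over ℂ whose (2n)-th coefficient is the n-th Catalan number for every n ≥ 1 and all of whose other coefficients vanish (the moment series Σ_{n≥1} φ(x^n) z^n of the standard semicircle distribution). Then ψ_sc∘(X·(1+X²)⁻¹) = X². In other words, χ(w) = w/(1+w²) is a √z-compositional inverse of ψ_sc, i.e., the S-transform of the standard semicircle distribution is S(z) = 1/√z. -/

import Mathlib

open PowerSeries

noncomputable def comp (F G : PowerSeries ℂ) : PowerSeries ℂ :=
  PowerSeries.mk fun n =>
    PowerSeries.coeff (R := ℂ) n
      (∑ k ∈ Finset.range (n + 1), PowerSeries.C (R := ℂ) (PowerSeries.coeff (R := ℂ) k F) * G ^ k)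

namespace CompAux

variable {G : PowerSeries ℂ} (hG : constantCoeff (R := ℂ) G = 0)

lemma coeff_pow_eq_zero (hG : constantCoeff (R := ℂ) G = 0) {n k : ℕ} (h : n < k) :
    coeff (R := ℂ) n (G ^ k) = 0 := by
  have hdvd : (X : PowerSeries ℂ) ^ k ∣ G ^ k := pow_dvd_pow_of_dvd (X_dvd_iff.mpr hG) k
  exact (X_pow_dvd_iff.mp hdvd) n h

lemma coeff_comp (hG : constantCoeff (R := ℂ) G = 0) (F : PowerSeries ℂ) {n m : ℕ} (h : n < m) :
    coeff (R := ℂ) n (comp F G) =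
      coeff (R := ℂ) n (∑ k ∈ Finset.range m, C (R := ℂ) (coeff (R := ℂ) k F) * G ^ k) := by
  rw [comp, coeff_mk]
  rw [map_sum, map_sum]
  apply Finset.sum_subset
  · exact Finset.range_subset_range.mpr h
  · intro k hk hk'
    have : n < k := by
      simp only [Finset.mem_range, not_lt] at hk'
      omega
    rw [coeff_C_mul, coeff_pow_eq_zero hG this, mul_zero]

lemma comp_add (hG : constantCoeff (R := ℂ) G = 0) (F F' : PowerSeries ℂ) :
    comp (F + F') G = comp F G + comp F' G := by
  ext n
  rw [map_add, coeff_comp hG _ (Nat.lt_succ_self n), coeff_comp hG F (Nat.lt_succ_self n),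
    coeff_comp hG F' (Nat.lt_succ_self n), ← map_add, ← Finset.sum_add_distrib]
  congr 1
  apply Finset.sum_congr rfl
  intro k _
  rw [map_add, map_add, add_mul]

lemma comp_C (hG : constantCoeff (R := ℂ) G = 0) (c : ℂ) : comp (C (R := ℂ) c) G = C (R := ℂ) c := by
  ext n
  rw [coeff_comp hG _ (Nat.lt_succ_self n)]
  rw [Finset.sum_eq_single 0]
  · simp
  · intro k _ hk
    rw [coeff_C, if_neg hk, map_zero, zero_mul]
  · simp

lemma comp_one (hG : constantCoeff (R := ℂ) G = 0) : comp 1 G = 1 := by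
  simpa using comp_C hG 1

lemma comp_X (hG : constantCoeff (R := ℂ) G = 0) : comp X G = G := by
  ext n
  rw [coeff_comp hG _ (Nat.lt_succ_of_lt (Nat.lt_succ_self n))]
  rw [Finset.sum_eq_single 1]
  · simp
  · intro k hk hk1
    rw [coeff_X, if_neg hk1, map_zero, zero_mul]
  · intro h
    simp at h

lemma comp_mul (hG : constantCoeff (R := ℂ) G = 0) (F F' : PowerSeries ℂ) :
    comp (F * F') G = comp F G * comp F' G := by
  ext n
  rw [coeff_comp hG _ (Nat.lt_succ_self n)]
  rw [PowerSeries.coeff_mul]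
  have hcoef : ∀ p ∈ Finset.HasAntidiagonal.antidiagonal n,
      coeff (R := ℂ) p.1 (comp F G) * coeff (R := ℂ) p.2 (comp F' G) =
      coeff (R := ℂ) p.1 (∑ k ∈ Finset.range (n+1), C (R := ℂ) (coeff (R := ℂ) k F) * G ^ k) *
      coeff (R := ℂ) p.2 (∑ k ∈ Finset.range (n+1), C (R := ℂ) (coeff (R := ℂ) k F') * G ^ k) := by
    intro p hp
    rw [Finset.HasAntidiagonal.mem_antidiagonal] at hp
    rw [coeff_comp hG F (by omega : p.1 < n+1), coeff_comp hG F' (by omega : p.2 < n+1)]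
  rw [Finset.sum_congr rfl hcoef, ← PowerSeries.coeff_mul]
  rw [Finset.sum_mul_sum]
  rw [map_sum]
  conv_rhs => rw [map_sum]
  -- LHS: coeff n of sum over k ≤ n of C (coeff k (F*F')) * G^k
  -- expand coeff k (F*F') as antidiagonal sum
  have lhs_eq : ∀ k ∈ Finset.range (n+1),
      coeff (R := ℂ) n (C (R := ℂ) (coeff (R := ℂ) k (F * F')) * G ^ k) =
      ∑ p ∈ Finset.HasAntidiagonal.antidiagonal k, coeff (R := ℂ) n (C (R := ℂ) (coeff (R := ℂ) p.1 F * coeff (R := ℂ) p.2 F') * G ^ (p.1 + p.2)) := by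
    intro k hk
    have hc : coeff (R := ℂ) k (F * F') = ∑ p ∈ Finset.HasAntidiagonal.antidiagonal k, coeff (R := ℂ) p.1 F * coeff (R := ℂ) p.2 F' :=
      PowerSeries.coeff_mul k F F'
    rw [hc, map_sum, Finset.sum_mul, map_sum]
    apply Finset.sum_congr rfl
    intro p hp
    rw [Finset.HasAntidiagonal.mem_antidiagonal] at hp
    rw [hp]
  rw [Finset.sum_congr rfl lhs_eq, Finset.sum_sigma']
  simp only [map_sum]
  have rhs_eq : ∀ i ∈ Finset.range (n+1), ∀ j ∈ Finset.range (n+1),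
      coeff (R := ℂ) n (C (R := ℂ) (coeff (R := ℂ) i F) * G ^ i * (C (R := ℂ) (coeff (R := ℂ) j F') * G ^ j)) =
      coeff (R := ℂ) n (C (R := ℂ) (coeff (R := ℂ) i F * coeff (R := ℂ) j F') * G ^ (i + j)) := by
    intro i _ j _
    congr 1
    rw [map_mul, pow_add]; ring
  rw [Finset.sum_congr rfl (fun i hi => Finset.sum_congr rfl (rhs_eq i hi)),
    ← Finset.sum_product']
  rw [← Finset.sum_filter_of_ne (p := fun q : ℕ × ℕ => q.1 + q.2 ≤ n)
    (by
      rintro ⟨i, j⟩ _ hne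
      by_contra hgt
      apply hne
      rw [coeff_C_mul, coeff_pow_eq_zero hG (by omega), mul_zero])]
  apply Finset.sum_nbij' (fun q => q.2) (fun q => ⟨q.1 + q.2, q⟩)
  · rintro ⟨k, p⟩ h
    simp only [Finset.mem_sigma, Finset.mem_range, Finset.HasAntidiagonal.mem_antidiagonal] at h
    simp only [Finset.mem_filter, Finset.mem_product, Finset.mem_range]
    omega
  · rintro ⟨i, j⟩ h
    simp only [Finset.mem_filter, Finset.mem_product, Finset.mem_range] at h
    simp only [Finset.mem_sigma, Finset.mem_range, Finset.HasAntidiagonal.mem_antidiagonal]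
    exact ⟨by omega, trivial⟩
  · rintro ⟨k, p⟩ h
    simp only [Finset.mem_sigma, Finset.mem_range, Finset.HasAntidiagonal.mem_antidiagonal] at h
    simp [h.2]
  · rintro ⟨i, j⟩ _
    rfl
  · rintro ⟨k, p⟩ _
    rfl

end CompAux

section FunEq

lemma coeff_one_add (ψ : PowerSeries ℂ)
    (h0 : PowerSeries.coeff (R := ℂ) 0 ψ = 0)
    (heven : ∀ n : ℕ, 1 ≤ n → PowerSeries.coeff (R := ℂ) (2 * n) ψ = (catalan n : ℂ))
    (hodd : ∀ n : ℕ, Odd n → PowerSeries.coeff (R := ℂ) n ψ = 0) :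
    (∀ i : ℕ, coeff (R := ℂ) (2 * i) (1 + ψ) = (catalan i : ℂ)) ∧
    (∀ i : ℕ, Odd i → coeff (R := ℂ) i (1 + ψ) = 0) := by
  constructor
  · intro i
    rcases Nat.eq_zero_or_pos i with hi | hi
    · subst hi
      simp only [mul_zero, map_add, h0, add_zero, catalan_zero, Nat.cast_one]
      simp
    · rw [map_add, heven i hi, PowerSeries.coeff_one, if_neg (by omega)]
      simp
  · intro i hi
    rw [map_add, hodd i hi, PowerSeries.coeff_one, if_neg (by rintro rfl; simp [Nat.odd_iff] at hi)]
    simp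

lemma psi_funeq (ψ : PowerSeries ℂ)
    (h0 : PowerSeries.coeff (R := ℂ) 0 ψ = 0)
    (heven : ∀ n : ℕ, 1 ≤ n → PowerSeries.coeff (R := ℂ) (2 * n) ψ = (catalan n : ℂ))
    (hodd : ∀ n : ℕ, Odd n → PowerSeries.coeff (R := ℂ) n ψ = 0) :
    ψ = X ^ 2 * (1 + ψ) ^ 2 := by
  obtain ⟨hE, hO⟩ := coeff_one_add ψ h0 heven hodd
  ext n
  rw [PowerSeries.coeff_X_pow_mul' ((1 + ψ) ^ 2) 2 n]
  by_cases hn : 2 ≤ n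
  swap
  · rw [if_neg hn]
    interval_cases n
    · exact h0
    · exact hodd 1 ⟨0, rfl⟩
  rw [if_pos hn]
  rw [sq (1 + ψ), PowerSeries.coeff_mul]
  rcases Nat.even_or_odd n with he | ho
  swap
  · rw [hodd n ho]
    symm
    apply Finset.sum_eq_zero
    rintro ⟨i, j⟩ hp
    rw [Finset.HasAntidiagonal.mem_antidiagonal] at hp
    rcases Nat.even_or_odd i with hi | hi
    · have hj : Odd j := by
        rw [Nat.odd_iff] at ho ⊢; rw [Nat.even_iff] at hi; omega
      rw [hO j hj, mul_zero]
    · rw [hO i hi, zero_mul]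
  obtain ⟨m, hm⟩ := he
  have hm' : n = 2 * m := by omega
  have hm1 : 1 ≤ m := by omega
  subst hm'
  rw [heven m hm1]
  set s := m - 1 with hs
  have hns : 2 * m - 2 = 2 * s := by omega
  rw [hns]
  set a : ℕ → ℂ := fun k => coeff (R := ℂ) k (1 + ψ) with ha
  have himg : (Finset.HasAntidiagonal.antidiagonal s).image (fun q : ℕ × ℕ => (2 * q.1, 2 * q.2))
      ⊆ Finset.HasAntidiagonal.antidiagonal (2 * s) := by
    intro p hp
    simp only [Finset.mem_image, Finset.HasAntidiagonal.mem_antidiagonal] at hp ⊢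
    obtain ⟨q, hq, rfl⟩ := hp
    omega
  have hinj : ∀ p ∈ Finset.HasAntidiagonal.antidiagonal s, ∀ q ∈ Finset.HasAntidiagonal.antidiagonal s,
      (2 * p.1, 2 * p.2) = (2 * q.1, 2 * q.2) → p = q := by
    rintro ⟨p1, p2⟩ _ ⟨q1, q2⟩ _ h
    simp only [Prod.mk.injEq] at h
    exact Prod.ext (by omega) (by omega)
  have step1 : ∑ p ∈ Finset.HasAntidiagonal.antidiagonal (2 * s), a p.1 * a p.2 =
      ∑ p ∈ (Finset.HasAntidiagonal.antidiagonal s).image (fun q : ℕ × ℕ => (2 * q.1, 2 * q.2)),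
        a p.1 * a p.2 := by
    symm
    apply Finset.sum_subset himg
    rintro ⟨i, j⟩ hp hnp
    simp only [Finset.HasAntidiagonal.mem_antidiagonal] at hp
    simp only [Finset.mem_image, Finset.HasAntidiagonal.mem_antidiagonal] at hnp
    rcases Nat.even_or_odd i with hi | hi
    · rcases Nat.even_or_odd j with hj | hj
      · exfalso
        apply hnp
        rw [Nat.even_iff] at hi hj
        exact ⟨(i / 2, j / 2), by omega, by simp only [Prod.mk.injEq]; omega⟩
      · rw [ha]; simp only [hO j hj, mul_zero]
    · rw [ha]; simp only [hO i hi, zero_mul]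
  rw [step1, Finset.sum_image hinj]
  have step2 : ∀ q ∈ Finset.HasAntidiagonal.antidiagonal s,
      a (2 * q.1) * a (2 * q.2) = (catalan q.1 : ℂ) * (catalan q.2 : ℂ) := by
    intro q _
    rw [ha]; simp only [hE]
  rw [Finset.sum_congr rfl step2]
  have hc : (catalan m : ℂ) =
      ((∑ p ∈ Finset.HasAntidiagonal.antidiagonal s, catalan p.1 * catalan p.2 : ℕ) : ℂ) := by
    rw [show m = s + 1 by omega, catalan_succ']
  rw [hc]
  push_cast
  rfl

end FunEq

/-- The S-transform of the standard semicircle distribution is `S(z) = 1/√z`: the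
moment series `ψ_sc = Σ_{n≥1} catalan(n)·z^{2n}` (even moments the Catalan numbers,
odd moments zero) satisfies `ψ_sc ∘ (X·(1+X²)⁻¹) = X²`, i.e. `χ(w) = w/(1+w²)` is a
`√z`-compositional inverse of `ψ_sc`. -/
theorem stmt_12 (ψ : PowerSeries ℂ)
    (h0 : PowerSeries.coeff (R := ℂ) 0 ψ = 0)
    (heven : ∀ n : ℕ, 1 ≤ n → PowerSeries.coeff (R := ℂ) (2 * n) ψ = (catalan n : ℂ))
    (hodd : ∀ n : ℕ, Odd n → PowerSeries.coeff (R := ℂ) n ψ = 0) :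
    comp ψ (PowerSeries.X * (1 + PowerSeries.X ^ 2)⁻¹) = PowerSeries.X ^ 2 := by
  set G : PowerSeries ℂ := X * (1 + X ^ 2)⁻¹ with hGdef
  have hG : constantCoeff (R := ℂ) G = 0 := by
    rw [hGdef, map_mul, constantCoeff_X, zero_mul]
  have hc1 : constantCoeff (R := ℂ) (1 + X ^ 2 : PowerSeries ℂ) ≠ 0 := by
    simp [map_pow]
  have hGX : G * (1 + X ^ 2) = X := by
    rw [hGdef, mul_assoc, PowerSeries.inv_mul_cancel _ hc1, mul_one]
  have hX2 : (X : PowerSeries ℂ) ^ 2 = G ^ 2 * (1 + X ^ 2) ^ 2 := by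
    rw [← mul_pow, hGX]
  set u : PowerSeries ℂ := comp ψ G with hu
  have hfun : ψ = X ^ 2 * (1 + ψ) ^ 2 := psi_funeq ψ h0 heven hodd
  have hcompu : u = G ^ 2 * (1 + u) ^ 2 := by
    rw [hu]
    conv_lhs => rw [hfun]
    rw [sq (X : PowerSeries ℂ), sq (1 + ψ), CompAux.comp_mul hG, CompAux.comp_mul hG,
      CompAux.comp_X hG, CompAux.comp_mul hG,
      CompAux.comp_add hG, CompAux.comp_one hG]
    ring
  have key : (u - X ^ 2) * (1 - G ^ 2 * (2 + u + X ^ 2)) = 0 := by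
    linear_combination hcompu - hX2
  rcases mul_eq_zero.mp key with h | h
  · exact sub_eq_zero.mp h
  · exfalso
    have : constantCoeff (R := ℂ) (1 - G ^ 2 * (2 + u + X ^ 2)) = 1 := by
      simp [map_sub, map_mul, map_pow, hG]
    rw [h, map_zero] at this
    exact one_ne_zero this.symm
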